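/- Covariance of disjointness: if Δ ⊢ A * B and Δ ⊢ B ≤ C, then Δ ⊢ A * C. -/

import Mathlib

/-! Syntax of F_i+ types -/
inductive Ty : Type
  | tvar : ℕ → Ty
  | tint : Ty
  | ttop : Ty
  | tbot : Ty
  | and : Ty → Ty → Ty
  | arrow : Ty → Ty → Ty
  | all : ℕ → Ty → Ty → Ty   -- ∀(X * A). B
  | rcd : ℕ → Ty → Ty
  deriving DecidableEq

/-- Type contexts: lists of (type variable, disjointness bound), most recent first. -/
abbrev TCtx := List (ℕ × Ty)
/-- Term contexts. -/
abbrev Ctx := List (ℕ × Ty)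

/-- Type well-formedness Δ ⊢ A. -/
inductive WfTy : TCtx → Ty → Prop
  | tvar {Δ X A} : (X, A) ∈ Δ → WfTy Δ (.tvar X)
  | tint {Δ} : WfTy Δ .tint
  | ttop {Δ} : WfTy Δ .ttop
  | tbot {Δ} : WfTy Δ .tbot
  | and {Δ A B} : WfTy Δ A → WfTy Δ B → WfTy Δ (.and A B)
  | arrow {Δ A B} : WfTy Δ A → WfTy Δ B → WfTy Δ (.arrow A B)
  | all {Δ X A B} : WfTy Δ A → WfTy ((X, A) :: Δ) B → WfTy Δ (.all X A B)
  | rcd {Δ l A} : WfTy Δ A → WfTy Δ (.rcd l A)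

/-- Type context well-formedness ⊢ Δ. -/
inductive TCW : TCtx → Prop
  | nil : TCW []
  | cons {Δ X A} : TCW Δ → WfTy Δ A → X ∉ Δ.map Prod.fst → TCW ((X, A) :: Δ)

/-- Term context well-formedness Δ ⊢ Γ. -/
def CW (Δ : TCtx) (Γ : Ctx) : Prop := ∀ p ∈ Γ, WfTy Δ p.2

/-- Type splitting  B ◁ A ▷ C, written `Spl A B C`. -/
inductive Spl : Ty → Ty → Ty → Prop
  | and {A B} : Spl (.and A B) A B
  | arrow {A B B1 B2} : Spl B B1 B2 → Spl (.arrow A B) (.arrow A B1) (.arrow A B2)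
  | rcd {l A A1 A2} : Spl A A1 A2 → Spl (.rcd l A) (.rcd l A1) (.rcd l A2)
  | all {X A B B1 B2} : Spl B B1 B2 → Spl (.all X A B) (.all X A B1) (.all X A B2)

/-- Ordinary types: no positive occurrence of intersection. -/
inductive Ordinary : Ty → Prop
  | tvar {X} : Ordinary (.tvar X)
  | tint : Ordinary .tint
  | ttop : Ordinary .ttop
  | tbot : Ordinary .tbot
  | arrow {A B} : Ordinary B → Ordinary (.arrow A B)
  | all {X A B} : Ordinary B → Ordinary (.all X A B)
  | rcd {l A} : Ordinary A → Ordinary (.rcd l A)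

/-- Bottom-like types ⌋A⌊. -/
inductive BL : Ty → Prop
  | bot : BL .tbot
  | andl {A B} : BL A → BL (.and A B)
  | andr {A B} : BL B → BL (.and A B)

/-- Algorithmic top-like types Δ ⊢ ⌉A⌈. -/
inductive TL : TCtx → Ty → Prop
  | top {Δ} : TL Δ .ttop
  | and {Δ A B} : TL Δ A → TL Δ B → TL Δ (.and A B)
  | arrow {Δ A B} : TL Δ B → TL Δ (.arrow A B)
  | rcd {Δ l A} : TL Δ A → TL Δ (.rcd l A)
  | all {Δ X A B} : TL ((X, A) :: Δ) B → TL Δ (.all X A B)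
  | tvar {Δ X A} : (X, A) ∈ Δ → BL A → TL Δ (.tvar X)

/-- Declarative BCD-style subtyping Δ ⊢ A <: B of F_i+. -/
inductive DSub : TCtx → Ty → Ty → Prop
  | refl {Δ A} : DSub Δ A A
  | trans {Δ A B C} : DSub Δ A B → DSub Δ B C → DSub Δ A C
  | top {Δ A} : DSub Δ A .ttop
  | bot {Δ A} : DSub Δ .tbot A
  | and {Δ A B C} : DSub Δ A B → DSub Δ A C → DSub Δ A (.and B C)
  | andl {Δ A B} : DSub Δ (.and A B) A
  | andr {Δ A B} : DSub Δ (.and A B) B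
  | arrow {Δ A1 A2 B1 B2} : DSub Δ B1 A1 → DSub Δ A2 B2 →
      DSub Δ (.arrow A1 A2) (.arrow B1 B2)
  | distArrow {Δ A B C} : DSub Δ (.and (.arrow A B) (.arrow A C)) (.arrow A (.and B C))
  | topArrow {Δ} : DSub Δ .ttop (.arrow .ttop .ttop)
  | rcd {Δ l A B} : DSub Δ A B → DSub Δ (.rcd l A) (.rcd l B)
  | distRcd {Δ l A B} : DSub Δ (.and (.rcd l A) (.rcd l B)) (.rcd l (.and A B))
  | topRcd {Δ l} : DSub Δ .ttop (.rcd l .ttop)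
  | all {Δ X A1 A2 B1 B2} : DSub Δ B1 A1 → DSub ((X, B1) :: Δ) A2 B2 →
      DSub Δ (.all X A1 A2) (.all X B1 B2)
  | topAll {Δ X A} : DSub Δ .ttop (.all X A .ttop)
  | distAll {Δ X A B C} : DSub Δ (.and (.all X A B) (.all X A C)) (.all X A (.and B C))
  | topVar {Δ X A} : (X, A) ∈ Δ → DSub Δ A .tbot → DSub Δ .ttop (.tvar X)

/-- Algorithmic subtyping Δ ⊢ A ≤ B with splittable types. -/
inductive ASub : TCtx → Ty → Ty → Prop
  | and {Δ A B B1 B2} : Spl B B1 B2 → ASub Δ A B1 → ASub Δ A B2 → ASub Δ A B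
  | int {Δ} : ASub Δ .tint .tint
  | var {Δ X} : ASub Δ (.tvar X) (.tvar X)
  | bot {Δ B} : Ordinary B → ASub Δ .tbot B
  | top {Δ A B} : Ordinary B → TL Δ B → ASub Δ A B
  | andl {Δ A1 A2 B} : Ordinary B → ASub Δ A1 B → ASub Δ (.and A1 A2) B
  | andr {Δ A1 A2 B} : Ordinary B → ASub Δ A2 B → ASub Δ (.and A1 A2) B
  | arrow {Δ A1 A2 B1 B2} : Ordinary (.arrow B1 B2) → ASub Δ B1 A1 → ASub Δ A2 B2 →
      ASub Δ (.arrow A1 A2) (.arrow B1 B2)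
  | rcd {Δ l A B} : Ordinary (.rcd l B) → ASub Δ A B → ASub Δ (.rcd l A) (.rcd l B)
  | all {Δ X A1 A2 B1 B2} : Ordinary (.all X B1 B2) → ASub Δ B1 A1 →
      ASub ((X, B1) :: Δ) A2 B2 → ASub Δ (.all X A1 A2) (.all X B1 B2)

/-- Disjointness axioms for structurally different type constructors. -/
inductive DAx : Ty → Ty → Prop
  | intArrow {A B} : DAx .tint (.arrow A B)
  | intRcd {l A} : DAx .tint (.rcd l A)
  | intAll {X A B} : DAx .tint (.all X A B)
  | arrowRcd {A B l C} : DAx (.arrow A B) (.rcd l C)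
  | arrowAll {A B X C D} : DAx (.arrow A B) (.all X C D)
  | rcdAll {l A X B C} : DAx (.rcd l A) (.all X B C)
  | rcdNeq {l1 l2 A B} : l1 ≠ l2 → DAx (.rcd l1 A) (.rcd l2 B)
  | symm {A B} : DAx A B → DAx B A

/-- Algorithmic disjointness Δ ⊢ A * B. -/
inductive Disj : TCtx → Ty → Ty → Prop
  | topl {Δ A B} : TL Δ A → Disj Δ A B
  | topr {Δ A B} : TL Δ B → Disj Δ A B
  | varl {Δ X A B} : (X, A) ∈ Δ → ASub Δ A B → Disj Δ (.tvar X) B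
  | varr {Δ X A B} : (X, A) ∈ Δ → ASub Δ A B → Disj Δ B (.tvar X)
  | spll {Δ A A1 A2 B} : Spl A A1 A2 → Disj Δ A1 B → Disj Δ A2 B → Disj Δ A B
  | splr {Δ A B B1 B2} : Spl B B1 B2 → Disj Δ A B1 → Disj Δ A B2 → Disj Δ A B
  | arrow {Δ A1 A2 B1 B2} : Disj Δ A2 B2 → Disj Δ (.arrow A1 A2) (.arrow B1 B2)
  | rcd {Δ l A B} : Disj Δ A B → Disj Δ (.rcd l A) (.rcd l B)
  | all {Δ X A1 A2 B1 B2} : Disj ((X, .and A1 B1) :: Δ) A2 B2 →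
      Disj Δ (.all X A1 A2) (.all X B1 B2)
  | ax {Δ A B} : DAx A B → Disj Δ A B

/-- Substitution of type C for type variable X in a type. -/
def substTT (X : ℕ) (C : Ty) : Ty → Ty
  | .tvar Y => if Y = X then C else .tvar Y
  | .tint => .tint
  | .ttop => .ttop
  | .tbot => .tbot
  | .and A B => .and (substTT X C A) (substTT X C B)
  | .arrow A B => .arrow (substTT X C A) (substTT X C B)
  | .all Y A B => .all Y (substTT X C A) (if Y = X then B else substTT X C B)
  | .rcd l A => .rcd l (substTT X C A)

/-- Pointwise substitution in a type context. -/
def substCtx (X : ℕ) (C : Ty) (Δ : TCtx) : TCtx :=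
  Δ.map fun p => (p.1, substTT X C p.2)

/-! Expressions -/
inductive Exp : Type
  | evar : ℕ → Exp
  | lit : ℤ → Exp
  | etop : Exp
  | anno : Exp → Ty → Exp
  | merge : Exp → Exp → Exp
  | efix : ℕ → Ty → Exp → Exp
  | app : Exp → Exp → Exp
  | tapp : Exp → Ty → Exp
  | proj : Exp → ℕ → Exp
  | lam : ℕ → Ty → Exp → Exp
  | tabs : ℕ → Exp → Exp
  | rcd : ℕ → Exp → Exp
  deriving DecidableEq

/-- Checkable terms p: lambdas, type abstractions, records. -/
inductive Chk : Exp → Prop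
  | lam {x A e} : Chk (.lam x A e)
  | tabs {X e} : Chk (.tabs X e)
  | rcd {l e} : Chk (.rcd l e)

/-- Values. -/
inductive Value : Exp → Prop
  | chk {p} : Chk p → Value p
  | anno {p A} : Chk p → Value (.anno p A)
  | lit {i} : Value (.lit i)
  | top : Value .etop
  | merge {v1 v2} : Value v1 → Value v2 → Value (.merge v1 v2)

/-- Pre-values u. -/
inductive PVal : Exp → Prop
  | lit {i} : PVal (.lit i)
  | top : PVal .etop
  | anno {e A} : PVal (.anno e A)
  | merge {u1 u2} : PVal u1 → PVal u2 → PVal (.merge u1 u2)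

/-- Principal types of pre-values. -/
inductive PTyp : Exp → Ty → Prop
  | lit {i} : PTyp (.lit i) .tint
  | top : PTyp .etop .ttop
  | anno {e A} : PTyp (.anno e A) A
  | merge {u1 u2 A B} : PTyp u1 A → PTyp u2 B → PTyp (.merge u1 u2) (.and A B)

/-- Top-like value generator ⟦A⟧. -/
def TLVal : Ty → Exp
  | .ttop => .etop
  | .arrow A B => .anno (.lam 0 .ttop .etop) (.arrow A B)
  | .rcd l A => .anno (.rcd l .etop) (.rcd l A)
  | .all X A B => .anno (.tabs X .etop) (.all X A B)
  | _ => .etop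

/-- Consistency of pre-values u₁ ≈ u₂. -/
inductive Cons : Exp → Exp → Prop
  | lit {i} : Cons (.lit i) (.lit i)
  | top : Cons .etop .etop
  | anno {e A B} : Cons (.anno e A) (.anno e B)
  | disjoint {u1 u2 A B} : PTyp u1 A → PTyp u2 B → Disj [] A B → Cons u1 u2
  | mergel {u1 u2 u} : Cons u1 u → Cons u2 u → Cons (.merge u1 u2) u
  | merger {u u1 u2} : Cons u u1 → Cons u u2 → Cons u (.merge u1 u2)

/-- Applicative distribution A ▷ B. -/
inductive AppDist : Ty → Ty → Prop
  | refl {A} : AppDist A A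
  | arrow {A B A1 B1 A2 B2} : AppDist A (.arrow A1 B1) → AppDist B (.arrow A2 B2) →
      AppDist (.and A B) (.arrow (.and A1 A2) (.and B1 B2))
  | all {A B X A1 B1 A2 B2} : AppDist A (.all X A1 B1) → AppDist B (.all X A2 B2) →
      AppDist (.and A B) (.all X (.and A1 A2) (.and B1 B2))
  | rcd {A B l B1 B2} : AppDist A (.rcd l B1) → AppDist B (.rcd l B2) →
      AppDist (.and A B) (.rcd l (.and B1 B2))

/-- Typing modes. -/
inductive Mode | inf | chk

/-- Bidirectional typing Δ; Γ ⊢ e ⇔ A. -/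
inductive Typing : TCtx → Ctx → Exp → Mode → Ty → Prop
  | top {Δ Γ} : TCW Δ → CW Δ Γ → Typing Δ Γ .etop .inf .ttop
  | lit {Δ Γ i} : TCW Δ → CW Δ Γ → Typing Δ Γ (.lit i) .inf .tint
  | var {Δ Γ x A} : TCW Δ → CW Δ Γ → (x, A) ∈ Γ → Typing Δ Γ (.evar x) .inf A
  | abs {Δ Γ x A e B1 B2} : WfTy Δ A → DSub Δ B1 A →
      Typing Δ ((x, A) :: Γ) e .chk B2 → Typing Δ Γ (.lam x A e) .chk (.arrow B1 B2)
  | tabs {Δ Γ X A e B} : WfTy Δ A → Typing ((X, A) :: Δ) Γ e .chk B →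
      Typing Δ Γ (.tabs X e) .chk (.all X A B)
  | rcd {Δ Γ l e A} : Typing Δ Γ e .chk A → Typing Δ Γ (.rcd l e) .chk (.rcd l A)
  | app {Δ Γ e1 e2 A B C} : Typing Δ Γ e1 .inf A → AppDist A (.arrow B C) →
      Typing Δ Γ e2 .chk B → Typing Δ Γ (.app e1 e2) .inf C
  | tapp {Δ Γ e A X B C A'} : Typing Δ Γ e .inf A → AppDist A (.all X B C) →
      WfTy Δ A' → Disj Δ A' B → Typing Δ Γ (.tapp e A') .inf (substTT X A' C)
  | proj {Δ Γ e A l B} : Typing Δ Γ e .inf A → AppDist A (.rcd l B) →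
      Typing Δ Γ (.proj e l) .inf B
  | merge {Δ Γ e1 e2 A B} : Typing Δ Γ e1 .inf A → Typing Δ Γ e2 .inf B →
      Disj Δ A B → Typing Δ Γ (.merge e1 e2) .inf (.and A B)
  | mergev {Δ Γ u1 u2 A B} : PVal u1 → PVal u2 → Cons u1 u2 →
      Typing Δ Γ u1 .inf A → Typing Δ Γ u2 .inf B →
      Typing Δ Γ (.merge u1 u2) .inf (.and A B)
  | inter {Δ Γ e A B} : Typing Δ Γ e .chk A → Typing Δ Γ e .chk B →
      Typing Δ Γ e .chk (.and A B)
  | fix {Δ Γ x A e} : WfTy Δ A → Typing Δ ((x, A) :: Γ) e .chk A →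
      Typing Δ Γ (.efix x A e) .inf A
  | anno {Δ Γ e A} : WfTy Δ A → Typing Δ Γ e .chk A → Typing Δ Γ (.anno e A) .inf A
  | sub {Δ Γ e A B} : Typing Δ Γ e .inf A → DSub Δ A B → Typing Δ Γ e .chk B

/-- Substitution of type C for type variable X in an expression. -/
def substTE (X : ℕ) (C : Ty) : Exp → Exp
  | .evar x => .evar x
  | .lit i => .lit i
  | .etop => .etop
  | .anno e A => .anno (substTE X C e) (substTT X C A)
  | .merge e1 e2 => .merge (substTE X C e1) (substTE X C e2)
  | .efix x A e => .efix x (substTT X C A) (substTE X C e)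
  | .app e1 e2 => .app (substTE X C e1) (substTE X C e2)
  | .tapp e A => .tapp (substTE X C e) (substTT X C A)
  | .proj e l => .proj (substTE X C e) l
  | .lam x A e => .lam x (substTT X C A) (substTE X C e)
  | .tabs Y e => .tabs Y (if Y = X then e else substTE X C e)
  | .rcd l e => .rcd l (substTE X C e)

/-- Substitution of expression e' for term variable x in an expression. -/
def substEE (x : ℕ) (e' : Exp) : Exp → Exp
  | .evar y => if y = x then e' else .evar y
  | .lit i => .lit i
  | .etop => .etop
  | .anno e A => .anno (substEE x e' e) A
  | .merge e1 e2 => .merge (substEE x e' e1) (substEE x e' e2)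
  | .efix y A e => .efix y A (if y = x then e else substEE x e' e)
  | .app e1 e2 => .app (substEE x e' e1) (substEE x e' e2)
  | .tapp e A => .tapp (substEE x e' e) A
  | .proj e l => .proj (substEE x e' e) l
  | .lam y A e => .lam y A (if y = x then e else substEE x e' e)
  | .tabs Y e => .tabs Y (substEE x e' e)
  | .rcd l e => .rcd l (substEE x e' e)

/-- Casting v ↪_A v'. -/
inductive Cast : Exp → Ty → Exp → Prop
  | int {i} : Cast (.lit i) .tint (.lit i)
  | top {v A} : Ordinary A → TL [] A → Cast v A (TLVal A)
  | anno {p B A} : Chk p → Ordinary A → ¬ TL [] A → DSub [] B A →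
      Cast (.anno p B) A (.anno p A)
  | mergel {v1 v2 A v} : Ordinary A → Cast v1 A v → Cast (.merge v1 v2) A v
  | merger {v1 v2 A v} : Ordinary A → Cast v2 A v → Cast (.merge v1 v2) A v
  | and {v A A1 A2 v1 v2} : Spl A A1 A2 → Cast v A1 v1 → Cast v A2 v2 →
      Cast v A (.merge v1 v2)

/-- Expression wrapping e ↝_A u. -/
inductive Wrap : Exp → Ty → Exp → Prop
  | and {e A A1 A2 u1 u2} : Spl A A1 A2 → Wrap e A1 u1 → Wrap e A2 u2 →
      Wrap e A (.merge u1 u2)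
  | anno {e A} : Ordinary A → ¬ TL [] A → Wrap e A (.anno e A)
  | top {e A} : Ordinary A → TL [] A → Wrap e A (TLVal A)

/-- Arguments: expressions, types, or record labels. -/
inductive Arg : Type
  | exp : Exp → Arg
  | ty : Ty → Arg
  | lbl : ℕ → Arg

/-- Parallel application v • arg ↪ u. -/
inductive PApp : Exp → Arg → Exp → Prop
  | abs {x A e B C e' u} : Wrap e' A u →
      PApp (.anno (.lam x A e) (.arrow B C)) (.exp e') (.anno (substEE x u e) C)
  | tabs {X e A B C} :
      PApp (.anno (.tabs X e) (.all X A B)) (.ty C)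
        (.anno (substTE X C e) (substTT X C B))
  | proj {l e A} : PApp (.anno (.rcd l e) (.rcd l A)) (.lbl l) (.anno e A)
  | merge {v1 v2 arg u1 u2} : PApp v1 arg u1 → PApp v2 arg u2 →
      PApp (.merge v1 v2) arg (.merge u1 u2)

/-- Small-step call-by-name reduction e ↪ e'. -/
inductive Step : Exp → Exp → Prop
  | papp {v e u} : Value v → PApp v (.exp e) u → Step (.app v e) u
  | ptapp {v A u} : Value v → PApp v (.ty A) u → Step (.tapp v A) u
  | pproj {v l u} : Value v → PApp v (.lbl l) u → Step (.proj v l) u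
  | fix {x A e} : Step (.efix x A e) (.anno (substEE x (.efix x A e) e) A)
  | annov {v A v'} : Value v → PVal v → Cast v A v' → Step (.anno v A) v'
  | appl {e1 e1' e2} : Step e1 e1' → Step (.app e1 e2) (.app e1' e2)
  | tappl {e e' A} : Step e e' → Step (.tapp e A) (.tapp e' A)
  | projl {e e' l} : Step e e' → Step (.proj e l) (.proj e' l)
  | anno {e e' A} : Step e e' → Step (.anno e A) (.anno e' A)
  | merge {e1 e1' e2 e2'} : Step e1 e1' → Step e2 e2' →
      Step (.merge e1 e2) (.merge e1' e2')
  | mergel {e1 e1' v2} : Step e1 e1' → Value v2 → Step (.merge e1 v2) (.merge e1' v2)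
  | merger {v1 e2 e2'} : Value v1 → Step e2 e2' → Step (.merge v1 e2) (.merge v1 e2')

/-- Isomorphic subtyping A ≲ B. -/
inductive IsoSub : Ty → Ty → Prop
  | refl {A} : IsoSub A A
  | and {A1 A2 B B1 B2} : Spl B B1 B2 → IsoSub A1 B1 → IsoSub A2 B2 →
      IsoSub (.and A1 A2) B

/-! ### Auxiliary lemmas -/

def sizeT : Ty → ℕ
  | .tvar _ => 1
  | .tint => 1
  | .ttop => 1
  | .tbot => 1
  | .and A B => sizeT A + sizeT B + 1
  | .arrow A B => sizeT A + sizeT B + 1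
  | .all _ A B => sizeT A + sizeT B + 1
  | .rcd _ A => sizeT A + 1

lemma spl_size {A B C : Ty} (h : Spl A B C) : sizeT B < sizeT A ∧ sizeT C < sizeT A := by
  induction h <;> simp [sizeT] <;> omega

lemma split_or_ord (A : Ty) : Ordinary A ∨ ∃ B C, Spl A B C := by
  induction A with
  | tvar X => exact .inl .tvar
  | tint => exact .inl .tint
  | ttop => exact .inl .ttop
  | tbot => exact .inl .tbot
  | and A B _ _ => exact .inr ⟨A, B, .and⟩
  | arrow A B _ ihB =>
    rcases ihB with h | ⟨B1, B2, h⟩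
    · exact .inl (.arrow h)
    · exact .inr ⟨_, _, .arrow h⟩
  | all X A B _ ihB =>
    rcases ihB with h | ⟨B1, B2, h⟩
    · exact .inl (.all h)
    · exact .inr ⟨_, _, .all h⟩
  | rcd l A ihA =>
    rcases ihA with h | ⟨B1, B2, h⟩
    · exact .inl (.rcd h)
    · exact .inr ⟨_, _, .rcd h⟩

lemma ord_no_spl {A B C : Ty} (hs : Spl A B C) (ho : Ordinary A) : False := by
  induction hs with
  | and => cases ho
  | arrow _ ih => cases ho with | arrow h => exact ih h
  | rcd _ ih => cases ho with | rcd h => exact ih h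
  | all _ ih => cases ho with | all h => exact ih h

lemma spl_det {A B1 C1 B2 C2 : Ty} (h1 : Spl A B1 C1) (h2 : Spl A B2 C2) :
    B1 = B2 ∧ C1 = C2 := by
  induction h1 generalizing B2 C2 with
  | and => cases h2 with | and => exact ⟨rfl, rfl⟩
  | arrow _ ih => cases h2 with | arrow h => obtain ⟨rfl, rfl⟩ := ih h; exact ⟨rfl, rfl⟩
  | rcd _ ih => cases h2 with | rcd h => obtain ⟨rfl, rfl⟩ := ih h; exact ⟨rfl, rfl⟩
  | all _ ih => cases h2 with | all h => obtain ⟨rfl, rfl⟩ := ih h; exact ⟨rfl, rfl⟩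

lemma asub_spl_inv {Δ : TCtx} {A B B1 B2 : Ty} (h : ASub Δ A B) (hs : Spl B B1 B2) :
    ASub Δ A B1 ∧ ASub Δ A B2 := by
  cases h with
  | and hs' ha hb => obtain ⟨rfl, rfl⟩ := spl_det hs' hs; exact ⟨ha, hb⟩
  | int => cases hs
  | var => cases hs
  | bot ho => exact absurd ho (fun ho => ord_no_spl hs ho)
  | top ho _ => exact absurd ho (fun ho => ord_no_spl hs ho)
  | andl ho _ => exact absurd ho (fun ho => ord_no_spl hs ho)
  | andr ho _ => exact absurd ho (fun ho => ord_no_spl hs ho)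
  | arrow ho _ _ => exact absurd ho (fun ho => ord_no_spl hs ho)
  | rcd ho _ => exact absurd ho (fun ho => ord_no_spl hs ho)
  | all ho _ _ => exact absurd ho (fun ho => ord_no_spl hs ho)

lemma asub_andl {Δ : TCtx} {A B C : Ty} (h : ASub Δ A C) : ASub Δ (.and A B) C := by
  induction h with
  | and hs _ _ ih1 ih2 => exact .and hs ih1 ih2
  | int => exact .andl .tint .int
  | var => exact .andl .tvar .var
  | bot ho => exact .andl ho (.bot ho)
  | top ho ht => exact .top ho ht
  | andl ho h _ => exact .andl ho (.andl ho h)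
  | andr ho h _ => exact .andl ho (.andr ho h)
  | arrow ho h1 h2 => exact .andl ho (.arrow ho h1 h2)
  | rcd ho h => exact .andl ho (.rcd ho h)
  | all ho h1 h2 => exact .andl ho (.all ho h1 h2)

lemma asub_andr {Δ : TCtx} {A B C : Ty} (h : ASub Δ B C) : ASub Δ (.and A B) C := by
  induction h with
  | and hs _ _ ih1 ih2 => exact .and hs ih1 ih2
  | int => exact .andr .tint .int
  | var => exact .andr .tvar .var
  | bot ho => exact .andr ho (.bot ho)
  | top ho ht => exact .top ho ht
  | andl ho h _ => exact .andr ho (.andl ho h)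
  | andr ho h _ => exact .andr ho (.andr ho h)
  | arrow ho h1 h2 => exact .andr ho (.arrow ho h1 h2)
  | rcd ho h => exact .andr ho (.rcd ho h)
  | all ho h1 h2 => exact .andr ho (.all ho h1 h2)
lemma sub_part_l {Δ : TCtx} {A1 C : Ty} (h : ASub Δ A1 C) :
    ∀ {A A2 : Ty}, Spl A A1 A2 → ASub Δ A C := by
  induction h with
  | and hs _ _ ih1 ih2 => exact fun hspl => .and hs (ih1 hspl) (ih2 hspl)
  | int => intro A A2 hspl; cases hspl; exact asub_andl .int
  | var => intro A A2 hspl; cases hspl; exact asub_andl .var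
  | bot ho => intro A A2 hspl; cases hspl; exact asub_andl (.bot ho)
  | top ho ht => exact fun _ => .top ho ht
  | andl ho h _ => intro A A2 hspl; cases hspl; exact asub_andl (.andl ho h)
  | andr ho h _ => intro A A2 hspl; cases hspl; exact asub_andl (.andr ho h)
  | arrow ho h1 h2 _ ih2 =>
    intro A A2 hspl
    cases hspl with
    | and => exact asub_andl (.arrow ho h1 h2)
    | arrow hs => exact .arrow ho h1 (ih2 hs)
  | rcd ho h ih =>
    intro A A2 hspl
    cases hspl with
    | and => exact asub_andl (.rcd ho h)
    | rcd hs => exact .rcd ho (ih hs)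
  | all ho h1 h2 _ ih2 =>
    intro A A2 hspl
    cases hspl with
    | and => exact asub_andl (.all ho h1 h2)
    | all hs => exact .all ho h1 (ih2 hs)

lemma sub_part_r {Δ : TCtx} {A2 C : Ty} (h : ASub Δ A2 C) :
    ∀ {A A1 : Ty}, Spl A A1 A2 → ASub Δ A C := by
  induction h with
  | and hs _ _ ih1 ih2 => exact fun hspl => .and hs (ih1 hspl) (ih2 hspl)
  | int => intro A A1 hspl; cases hspl; exact asub_andr .int
  | var => intro A A1 hspl; cases hspl; exact asub_andr .var
  | bot ho => intro A A1 hspl; cases hspl; exact asub_andr (.bot ho)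
  | top ho ht => exact fun _ => .top ho ht
  | andl ho h _ => intro A A1 hspl; cases hspl; exact asub_andr (.andl ho h)
  | andr ho h _ => intro A A1 hspl; cases hspl; exact asub_andr (.andr ho h)
  | arrow ho h1 h2 _ ih2 =>
    intro A A1 hspl
    cases hspl with
    | and => exact asub_andr (.arrow ho h1 h2)
    | arrow hs => exact .arrow ho h1 (ih2 hs)
  | rcd ho h ih =>
    intro A A1 hspl
    cases hspl with
    | and => exact asub_andr (.rcd ho h)
    | rcd hs => exact .rcd ho (ih hs)
  | all ho h1 h2 _ ih2 =>
    intro A A1 hspl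
    cases hspl with
    | and => exact asub_andr (.all ho h1 h2)
    | all hs => exact .all ho h1 (ih2 hs)

lemma asub_refl (Δ : TCtx) (A : Ty) : ASub Δ A A := by
  suffices h : ∀ n (Δ : TCtx) (A : Ty), sizeT A ≤ n → ASub Δ A A from
    h (sizeT A) Δ A le_rfl
  intro n
  induction n with
  | zero => intro Δ A h; cases A <;> simp [sizeT] at h
  | succ n ih =>
    intro Δ A hle
    rcases split_or_ord A with ho | ⟨A1, A2, hs⟩
    · cases A with
      | tvar X => exact .var
      | tint => exact .int
      | ttop => exact .top .ttop .top
      | tbot => exact .bot .tbot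
      | and A1 A2 => cases ho
      | arrow A1 A2 =>
        simp [sizeT] at hle
        exact .arrow ho (ih Δ A1 (by omega)) (ih Δ A2 (by omega))
      | all X A1 A2 =>
        simp [sizeT] at hle
        exact .all ho (ih Δ A1 (by omega)) (ih _ A2 (by omega))
      | rcd l A1 =>
        simp [sizeT] at hle
        exact .rcd ho (ih Δ A1 (by omega))
    · obtain ⟨hs1, hs2⟩ := spl_size hs
      exact .and hs (sub_part_l (ih Δ A1 (by omega)) hs)
        (sub_part_r (ih Δ A2 (by omega)) hs)
/-- Relational context change for top-like types. -/
lemma tl_rel {Γ : TCtx} {T : Ty} (h : TL Γ T) :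
    ∀ {Γ' : TCtx}, (∀ Y D, (Y, D) ∈ Γ → BL D → ∃ D', (Y, D') ∈ Γ' ∧ BL D') →
    TL Γ' T := by
  induction h with
  | top => exact fun _ => .top
  | and _ _ ih1 ih2 => exact fun hc => .and (ih1 hc) (ih2 hc)
  | arrow _ ih => exact fun hc => .arrow (ih hc)
  | rcd _ ih => exact fun hc => .rcd (ih hc)
  | all _ ih =>
    intro Γ' hc
    refine .all (ih ?_)
    intro Y D hmem hbl
    rcases List.mem_cons.1 hmem with h | h
    · exact ⟨D, by rw [h] at *; exact List.mem_cons_self, hbl⟩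
    · obtain ⟨D', hm, hb⟩ := hc Y D h hbl
      exact ⟨D', List.mem_cons_of_mem _ hm, hb⟩
  | tvar hmem hbl =>
    intro Γ' hc
    obtain ⟨D', hm, hb⟩ := hc _ _ hmem hbl
    exact .tvar hm hb

/-- Relational context change for algorithmic subtyping. -/
lemma asub_rel {Γ : TCtx} {A B : Ty} (h : ASub Γ A B) :
    ∀ {Γ' : TCtx}, (∀ Y D, (Y, D) ∈ Γ → BL D → ∃ D', (Y, D') ∈ Γ' ∧ BL D') →
    ASub Γ' A B := by
  induction h with
  | and hs _ _ ih1 ih2 => exact fun hc => .and hs (ih1 hc) (ih2 hc)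
  | int => exact fun _ => .int
  | var => exact fun _ => .var
  | bot ho => exact fun _ => .bot ho
  | top ho ht => exact fun hc => .top ho (tl_rel ht hc)
  | andl ho _ ih => exact fun hc => .andl ho (ih hc)
  | andr ho _ ih => exact fun hc => .andr ho (ih hc)
  | arrow ho _ _ ih1 ih2 => exact fun hc => .arrow ho (ih1 hc) (ih2 hc)
  | rcd ho _ ih => exact fun hc => .rcd ho (ih hc)
  | all ho _ _ ih1 ih2 =>
    intro Γ' hc
    refine .all ho (ih1 hc) (ih2 ?_)
    intro Y D hmem hbl
    rcases List.mem_cons.1 hmem with h | h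
    · exact ⟨D, by rw [h] at *; exact List.mem_cons_self, hbl⟩
    · obtain ⟨D', hm, hb⟩ := hc Y D h hbl
      exact ⟨D', List.mem_cons_of_mem _ hm, hb⟩

/-- Subtypes of bottom-like types are bottom-like. -/
lemma asub_bl {Δ : TCtx} {C B : Ty} (h : ASub Δ C B) (hB : BL B) : BL C := by
  induction h with
  | and hs _ _ ih1 ih2 =>
    cases hB with
    | bot => cases hs
    | andl hb => cases hs; exact ih1 hb
    | andr hb => cases hs; exact ih2 hb
  | int => cases hB
  | var => cases hB
  | bot => exact .bot
  | top ho ht =>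
    cases hB with
    | bot => cases ht
    | andl _ => cases ho
    | andr _ => cases ho
  | andl _ _ ih => exact .andl (ih hB)
  | andr _ _ ih => exact .andr (ih hB)
  | arrow => cases hB
  | rcd => cases hB
  | all => cases hB

/-- Bottom-like types are subtypes of everything. -/
lemma bl_asub {A : Ty} (hA : BL A) (Δ : TCtx) (C : Ty) : ASub Δ A C := by
  suffices h : ∀ n (Δ : TCtx) (C : Ty), sizeT C ≤ n → ∀ A, BL A → ASub Δ A C from
    h (sizeT C) Δ C le_rfl A hA
  intro n
  induction n with
  | zero => intro Δ C h; cases C <;> simp [sizeT] at h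
  | succ n ih =>
    intro Δ C hle A hA
    rcases split_or_ord C with ho | ⟨C1, C2, hs⟩
    · induction hA with
      | bot => exact .bot ho
      | andl _ ih' => exact .andl ho ih'
      | andr _ ih' => exact .andr ho ih'
    · obtain ⟨hs1, hs2⟩ := spl_size hs
      exact .and hs (ih Δ C1 (by omega) A hA) (ih Δ C2 (by omega) A hA)

lemma tl_spl_merge {Δ : TCtx} {C C1 C2 : Ty} (hs : Spl C C1 C2)
    (h1 : TL Δ C1) (h2 : TL Δ C2) : TL Δ C := by
  induction hs generalizing Δ with
  | and => exact .and h1 h2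
  | arrow _ ih =>
    cases h1 with | arrow h1 => cases h2 with | arrow h2 => exact .arrow (ih h1 h2)
  | rcd _ ih =>
    cases h1 with | rcd h1 => cases h2 with | rcd h2 => exact .rcd (ih h1 h2)
  | all _ ih =>
    cases h1 with | all h1 => cases h2 with | all h2 => exact .all (ih h1 h2)

lemma tl_spl {Δ : TCtx} {C C1 C2 : Ty} (hs : Spl C C1 C2) (h : TL Δ C) :
    TL Δ C1 ∧ TL Δ C2 := by
  induction hs generalizing Δ with
  | and => cases h with | and h1 h2 => exact ⟨h1, h2⟩
  | arrow _ ih =>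
    cases h with | arrow h =>
      obtain ⟨h1, h2⟩ := ih h; exact ⟨.arrow h1, .arrow h2⟩
  | rcd _ ih =>
    cases h with | rcd h =>
      obtain ⟨h1, h2⟩ := ih h; exact ⟨.rcd h1, .rcd h2⟩
  | all _ ih =>
    cases h with | all h =>
      obtain ⟨h1, h2⟩ := ih h; exact ⟨.all h1, .all h2⟩

/-- Supertypes of top-like types are top-like. -/
lemma asub_tl {Δ : TCtx} {B C : Ty} (h : ASub Δ B C) (hB : TL Δ B) : TL Δ C := by
  induction h with
  | and hs _ _ ih1 ih2 => exact tl_spl_merge hs (ih1 hB) (ih2 hB)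
  | int => exact hB
  | var => exact hB
  | bot => cases hB
  | top _ ht => exact ht
  | andl _ _ ih => cases hB with | and h1 h2 => exact ih h1
  | andr _ _ ih => cases hB with | and h1 h2 => exact ih h2
  | arrow _ _ _ _ ih2 => cases hB with | arrow h => exact .arrow (ih2 h)
  | rcd _ _ ih => cases hB with | rcd h => exact .rcd (ih h)
  | all _ h1 _ _ ih2 =>
    cases hB with | all ht =>
      refine .all (ih2 (tl_rel ht ?_))
      intro Y D hmem hbl
      rcases List.mem_cons.1 hmem with hh | hh
      · obtain ⟨rfl, rfl⟩ := Prod.mk.injEq .. ▸ hh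
        exact ⟨_, List.mem_cons_self, asub_bl h1 hbl⟩
      · exact ⟨D, List.mem_cons_of_mem _ hh, hbl⟩

lemma asub_ord_inv {Δ : TCtx} {B C : Ty} (h : ASub Δ B C) :
    ∀ {B1 B2 : Ty}, Spl B B1 B2 → Ordinary C →
    ASub Δ B1 C ∨ ASub Δ B2 C ∨ TL Δ C := by
  induction h with
  | and hs _ _ _ _ => exact fun hspl ho => absurd ho (fun ho => ord_no_spl hs ho)
  | int => intro B1 B2 hspl; cases hspl
  | var => intro B1 B2 hspl; cases hspl
  | bot => intro B1 B2 hspl; cases hspl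
  | top _ ht => exact fun _ _ => .inr (.inr ht)
  | andl _ h _ => intro B1 B2 hspl _; cases hspl; exact .inl h
  | andr _ h _ => intro B1 B2 hspl _; cases hspl; exact .inr (.inl h)
  | arrow ho h1 h2 _ ih2 =>
    intro B1 B2 hspl hoC
    cases hspl with
    | arrow hs =>
      cases hoC with | arrow hoC2 =>
        rcases ih2 hs hoC2 with h | h | h
        · exact .inl (.arrow ho h1 h)
        · exact .inr (.inl (.arrow ho h1 h))
        · exact .inr (.inr (.arrow h))
  | rcd ho h ih =>
    intro B1 B2 hspl hoC
    cases hspl with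
    | rcd hs =>
      cases hoC with | rcd hoC2 =>
        rcases ih hs hoC2 with h | h | h
        · exact .inl (.rcd ho h)
        · exact .inr (.inl (.rcd ho h))
        · exact .inr (.inr (.rcd h))
  | all ho h1 h2 _ ih2 =>
    intro B1 B2 hspl hoC
    cases hspl with
    | all hs =>
      cases hoC with | all hoC2 =>
        rcases ih2 hs hoC2 with h | h | h
        · exact .inl (.all ho h1 h)
        · exact .inr (.inl (.all ho h1 h))
        · exact .inr (.inr (.all h))
lemma narrow_cond {Δ : TCtx} {X : ℕ} {P Q : Ty} (h : ASub Δ Q P) :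
    ∀ Y D, (Y, D) ∈ (X, P) :: Δ → BL D → ∃ D', (Y, D') ∈ (X, Q) :: Δ ∧ BL D' := by
  intro Y D hmem hbl
  rcases List.mem_cons.1 hmem with hh | hh
  · obtain ⟨rfl, rfl⟩ := Prod.mk.injEq .. ▸ hh
    exact ⟨Q, List.mem_cons_self, asub_bl h hbl⟩
  · exact ⟨D, List.mem_cons_of_mem _ hh, hbl⟩

/-- Transitivity of algorithmic subtyping. -/
lemma asub_trans {Δ : TCtx} {A B C : Ty} (h1 : ASub Δ A B) (h2 : ASub Δ B C) :
    ASub Δ A C := by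
  suffices h : ∀ n (Δ : TCtx) (A B C : Ty), sizeT A + sizeT B + sizeT C ≤ n →
      ASub Δ A B → ASub Δ B C → ASub Δ A C from
    h _ Δ A B C le_rfl h1 h2
  clear h1 h2 Δ A B C
  intro n
  induction n with
  | zero => intro Δ A B C hle; cases A <;> simp [sizeT] at hle
  | succ n ih =>
    intro Δ A B C hle h1 h2
    rcases split_or_ord C with hoC | ⟨C1, C2, hsC⟩
    · cases h2 with
      | and hs _ _ => exact absurd hoC (fun hoC => ord_no_spl hs hoC)
      | int => exact h1
      | var => exact h1
      | bot => exact bl_asub (asub_bl h1 .bot) Δ C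
      | top ho ht => exact .top ho ht
      | andl ho hs =>
        have := (asub_spl_inv h1 .and).1
        exact ih Δ _ _ _ (by simp [sizeT] at hle ⊢; omega) this hs
      | andr ho hs =>
        have := (asub_spl_inv h1 .and).2
        exact ih Δ _ _ _ (by simp [sizeT] at hle ⊢; omega) this hs
      | arrow ho hC1B1 hB2C2 =>
        rename_i B1 B2 C1 C2
        cases h1 with
        | and hs hA1 hA2 =>
          cases hs with
          | arrow hsB2 =>
            rename_i B21 B22
            have hq1 := (spl_size hsB2).1
            have hq2 := (spl_size hsB2).2
            have hoC2 : Ordinary C2 := by cases ho with | arrow h => exact h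
            rcases asub_ord_inv hB2C2 hsB2 hoC2 with h | h | h
            · exact ih Δ _ _ _ (by simp [sizeT] at hle ⊢; omega) hA1
                (.arrow ho hC1B1 h)
            · exact ih Δ _ _ _ (by simp [sizeT] at hle ⊢; omega) hA2
                (.arrow ho hC1B1 h)
            · exact .top ho (.arrow h)
        | top hoB ht => exact .top ho (asub_tl (.arrow ho hC1B1 hB2C2) ht)
        | bot _ => exact .bot ho
        | andl hoB hsub =>
          exact .andl ho (ih Δ _ _ _ (by simp [sizeT] at hle ⊢; omega) hsub
            (.arrow ho hC1B1 hB2C2))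
        | andr hoB hsub =>
          exact .andr ho (ih Δ _ _ _ (by simp [sizeT] at hle ⊢; omega) hsub
            (.arrow ho hC1B1 hB2C2))
        | arrow hoB hB1A1 hA2B2 =>
          exact .arrow ho (ih Δ _ _ _ (by simp [sizeT] at hle ⊢; omega) hC1B1 hB1A1)
            (ih Δ _ _ _ (by simp [sizeT] at hle ⊢; omega) hA2B2 hB2C2)
      | rcd ho hB0C0 =>
        rename_i l B0 C0
        cases h1 with
        | and hs hA1 hA2 =>
          cases hs with
          | rcd hsB0 =>
            have hq1 := (spl_size hsB0).1
            have hq2 := (spl_size hsB0).2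
            have hoC0 : Ordinary C0 := by cases ho with | rcd h => exact h
            rcases asub_ord_inv hB0C0 hsB0 hoC0 with h | h | h
            · exact ih Δ _ _ _ (by simp [sizeT] at hle ⊢; omega) hA1 (.rcd ho h)
            · exact ih Δ _ _ _ (by simp [sizeT] at hle ⊢; omega) hA2 (.rcd ho h)
            · exact .top ho (.rcd h)
        | top hoB ht => exact .top ho (asub_tl (.rcd ho hB0C0) ht)
        | bot _ => exact .bot ho
        | andl hoB hsub =>
          exact .andl ho (ih Δ _ _ _ (by simp [sizeT] at hle ⊢; omega) hsub
            (.rcd ho hB0C0))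
        | andr hoB hsub =>
          exact .andr ho (ih Δ _ _ _ (by simp [sizeT] at hle ⊢; omega) hsub
            (.rcd ho hB0C0))
        | rcd hoB hsub =>
          exact .rcd ho (ih Δ _ _ _ (by simp [sizeT] at hle ⊢; omega) hsub hB0C0)
      | all ho hC1B1 hB2C2 =>
        rename_i B1 B2 X C1 C2
        cases h1 with
        | and hs hA1 hA2 =>
          cases hs with
          | all hsB2 =>
            have hq1 := (spl_size hsB2).1
            have hq2 := (spl_size hsB2).2
            have hoC2 : Ordinary C2 := by cases ho with | all h => exact h
            rcases asub_ord_inv hB2C2 hsB2 hoC2 with h | h | h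
            · exact ih Δ _ _ _ (by simp [sizeT] at hle ⊢; omega) hA1
                (.all ho hC1B1 h)
            · exact ih Δ _ _ _ (by simp [sizeT] at hle ⊢; omega) hA2
                (.all ho hC1B1 h)
            · exact .top ho (.all h)
        | top hoB ht => exact .top ho (asub_tl (.all ho hC1B1 hB2C2) ht)
        | bot _ => exact .bot ho
        | andl hoB hsub =>
          exact .andl ho (ih Δ _ _ _ (by simp [sizeT] at hle ⊢; omega) hsub
            (.all ho hC1B1 hB2C2))
        | andr hoB hsub =>
          exact .andr ho (ih Δ _ _ _ (by simp [sizeT] at hle ⊢; omega) hsub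
            (.all ho hC1B1 hB2C2))
        | all hoB hB1A1 hA2B2 =>
          have hA2B2' := asub_rel hA2B2 (narrow_cond hC1B1)
          exact .all ho (ih Δ _ _ _ (by simp [sizeT] at hle ⊢; omega) hC1B1 hB1A1)
            (ih _ _ _ _ (by simp [sizeT] at hle ⊢; omega) hA2B2' hB2C2)
    · obtain ⟨ha, hb⟩ := asub_spl_inv h2 hsC
      have hq1 := (spl_size hsC).1
      have hq2 := (spl_size hsC).2
      exact .and hsC (ih Δ _ _ _ (by omega) h1 ha) (ih Δ _ _ _ (by omega) h1 hb)
/-- Same head constructor. -/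
inductive SH : Ty → Ty → Prop
  | tvar {X} : SH (.tvar X) (.tvar X)
  | tint : SH .tint .tint
  | ttop : SH .ttop .ttop
  | tbot : SH .tbot .tbot
  | and {A B C D} : SH (.and A B) (.and C D)
  | arrow {A B C D} : SH (.arrow A B) (.arrow C D)
  | all {X Y A B C D} : SH (.all X A B) (.all Y C D)
  | rcd {l A B} : SH (.rcd l A) (.rcd l B)

lemma sh_refl (A : Ty) : SH A A := by cases A <;> constructor

/-- Disjointness axioms only depend on the head constructors. -/
lemma dax_sh {A B : Ty} (h : DAx A B) :
    ∀ {A' B' : Ty}, SH A A' → SH B B' → DAx A' B' := by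
  induction h with
  | intArrow => intro A' B' h1 h2; cases h1; cases h2; exact .intArrow
  | intRcd => intro A' B' h1 h2; cases h1; cases h2; exact .intRcd
  | intAll => intro A' B' h1 h2; cases h1; cases h2; exact .intAll
  | arrowRcd => intro A' B' h1 h2; cases h1; cases h2; exact .arrowRcd
  | arrowAll => intro A' B' h1 h2; cases h1; cases h2; exact .arrowAll
  | rcdAll => intro A' B' h1 h2; cases h1; cases h2; exact .rcdAll
  | rcdNeq hne => intro A' B' h1 h2; cases h1; cases h2; exact .rcdNeq hne
  | symm _ ih => intro A' B' h1 h2; exact .symm (ih h2 h1)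

def daxGood : Ty → Prop
  | .tint => True
  | .arrow _ _ => True
  | .rcd _ _ => True
  | .all _ _ _ => True
  | _ => False

lemma dax_good {A B : Ty} (h : DAx A B) : daxGood A ∧ daxGood B := by
  induction h with
  | symm _ ih => exact ⟨ih.2, ih.1⟩
  | _ => exact ⟨trivial, trivial⟩

/-- Anything disjoint with ⊥ is disjoint with everything. -/
lemma disj_bot {Δ : TCtx} {A B : Ty} (h : Disj Δ A B) :
    B = .tbot → ∀ C, Disj Δ A C := by
  induction h with
  | topl ht => exact fun _ _ => .topl ht
  | topr ht => rintro rfl; cases ht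
  | varl hmem hsub =>
    rintro rfl C
    exact .varl hmem (bl_asub (asub_bl hsub .bot) _ _)
  | varr hmem hsub => intro hB; exact absurd hB (by simp)
  | spll hs _ _ ih1 ih2 => exact fun hB C => .spll hs (ih1 hB C) (ih2 hB C)
  | splr hs _ _ _ _ => rintro rfl; cases hs
  | arrow _ _ => intro hB; exact absurd hB (by simp)
  | rcd _ _ => intro hB; exact absurd hB (by simp)
  | all _ _ => intro hB; exact absurd hB (by simp)
  | ax hax => rintro rfl; exact (dax_good hax).2.elim

/-- Disjointness splits on the right. -/
lemma disj_spl_r {Δ : TCtx} {A B : Ty} (h : Disj Δ A B) :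
    ∀ {B1 B2 : Ty}, Spl B B1 B2 → Disj Δ A B1 ∧ Disj Δ A B2 := by
  induction h with
  | topl ht => exact fun _ => ⟨.topl ht, .topl ht⟩
  | topr ht =>
    intro B1 B2 hs
    obtain ⟨h1, h2⟩ := tl_spl hs ht
    exact ⟨.topr h1, .topr h2⟩
  | varl hmem hsub =>
    intro B1 B2 hs
    obtain ⟨h1, h2⟩ := asub_spl_inv hsub hs
    exact ⟨.varl hmem h1, .varl hmem h2⟩
  | varr hmem hsub => intro B1 B2 hs; cases hs
  | spll hsA _ _ ih1 ih2 =>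
    intro B1 B2 hs
    exact ⟨.spll hsA (ih1 hs).1 (ih2 hs).1, .spll hsA (ih1 hs).2 (ih2 hs).2⟩
  | splr hsB h1 h2 _ _ =>
    intro B1 B2 hs
    obtain ⟨rfl, rfl⟩ := spl_det hsB hs
    exact ⟨h1, h2⟩
  | arrow _ ih =>
    intro B1 B2 hs
    cases hs with
    | arrow hs' => obtain ⟨a, b⟩ := ih hs'; exact ⟨.arrow a, .arrow b⟩
  | rcd _ ih =>
    intro B1 B2 hs
    cases hs with
    | rcd hs' => obtain ⟨a, b⟩ := ih hs'; exact ⟨.rcd a, .rcd b⟩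
  | all _ ih =>
    intro B1 B2 hs
    cases hs with
    | all hs' => obtain ⟨a, b⟩ := ih hs'; exact ⟨.all a, .all b⟩
  | ax hax =>
    intro B1 B2 hs
    cases hs with
    | and => exact (dax_good hax).2.elim
    | arrow _ =>
      exact ⟨.ax (dax_sh hax (sh_refl _) .arrow), .ax (dax_sh hax (sh_refl _) .arrow)⟩
    | rcd _ =>
      exact ⟨.ax (dax_sh hax (sh_refl _) .rcd), .ax (dax_sh hax (sh_refl _) .rcd)⟩
    | all _ =>
      exact ⟨.ax (dax_sh hax (sh_refl _) .all), .ax (dax_sh hax (sh_refl _) .all)⟩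
lemma narrow_cond_app {E Δ : TCtx} {X : ℕ} {P Q : Ty} (h : ASub Δ Q P) :
    ∀ Y D, (Y, D) ∈ E ++ (X, P) :: Δ → BL D →
      ∃ D', (Y, D') ∈ E ++ (X, Q) :: Δ ∧ BL D' := by
  intro Y D hmem hbl
  rcases List.mem_append.1 hmem with hm | hm
  · exact ⟨D, List.mem_append_left _ hm, hbl⟩
  · rcases List.mem_cons.1 hm with hh | hh
    · obtain ⟨rfl, rfl⟩ := Prod.mk.injEq .. ▸ hh
      exact ⟨Q, List.mem_append_right _ (List.mem_cons_self), asub_bl h hbl⟩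
    · exact ⟨D, List.mem_append_right _ (List.mem_cons_of_mem _ hh), hbl⟩

lemma weaken_cond_app {E Δ : TCtx} {X : ℕ} {Q : Ty} :
    ∀ Y D, (Y, D) ∈ Δ → BL D → ∃ D', (Y, D') ∈ E ++ (X, Q) :: Δ ∧ BL D' :=
  fun _ D hm hb => ⟨D, List.mem_append_right _ (List.mem_cons_of_mem _ hm), hb⟩

/-- Narrowing of disjointness. -/
lemma disj_narrow {Γ : TCtx} {M N : Ty} (h : Disj Γ M N) :
    ∀ {E Δ : TCtx} {X : ℕ} {P Q : Ty}, Γ = E ++ (X, P) :: Δ → ASub Δ Q P →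
    Disj (E ++ (X, Q) :: Δ) M N := by
  induction h with
  | topl ht => rintro E Δ X P Q rfl hQP; exact .topl (tl_rel ht (narrow_cond_app hQP))
  | topr ht => rintro E Δ X P Q rfl hQP; exact .topr (tl_rel ht (narrow_cond_app hQP))
  | varl hmem hsub =>
    rintro E Δ X P Q rfl hQP
    have hsub' := asub_rel hsub (narrow_cond_app hQP)
    rcases List.mem_append.1 hmem with hm | hm
    · exact .varl (List.mem_append_left _ hm) hsub'
    · rcases List.mem_cons.1 hm with hh | hh
      · obtain ⟨rfl, rfl⟩ := Prod.mk.injEq .. ▸ hh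
        refine .varl (List.mem_append_right _ (List.mem_cons_self))
          (asub_trans (asub_rel hQP weaken_cond_app) hsub')
      · exact .varl (List.mem_append_right _ (List.mem_cons_of_mem _ hh)) hsub'
  | varr hmem hsub =>
    rintro E Δ X P Q rfl hQP
    have hsub' := asub_rel hsub (narrow_cond_app hQP)
    rcases List.mem_append.1 hmem with hm | hm
    · exact .varr (List.mem_append_left _ hm) hsub'
    · rcases List.mem_cons.1 hm with hh | hh
      · obtain ⟨rfl, rfl⟩ := Prod.mk.injEq .. ▸ hh
        refine .varr (List.mem_append_right _ (List.mem_cons_self))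
          (asub_trans (asub_rel hQP weaken_cond_app) hsub')
      · exact .varr (List.mem_append_right _ (List.mem_cons_of_mem _ hh)) hsub'
  | spll hs _ _ ih1 ih2 =>
    rintro E Δ X P Q rfl hQP
    exact .spll hs (ih1 rfl hQP) (ih2 rfl hQP)
  | splr hs _ _ ih1 ih2 =>
    rintro E Δ X P Q rfl hQP
    exact .splr hs (ih1 rfl hQP) (ih2 rfl hQP)
  | arrow _ ih => rintro E Δ X P Q rfl hQP; exact .arrow (ih rfl hQP)
  | rcd _ ih => rintro E Δ X P Q rfl hQP; exact .rcd (ih rfl hQP)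
  | all _ ih =>
    rintro E Δ X P Q rfl hQP
    exact .all (ih (E := _ :: E) rfl hQP)
  | ax hax => rintro E Δ X P Q rfl hQP; exact .ax hax

/-- Covariance of disjointness. -/
theorem disjointness_covariance (Δ : TCtx) (A B C : Ty)
    (h1 : Disj Δ A B) (h2 : ASub Δ B C) : Disj Δ A C := by
  suffices h : ∀ n (Δ : TCtx) (A B C : Ty), sizeT A + sizeT B + sizeT C ≤ n →
      Disj Δ A B → ASub Δ B C → Disj Δ A C from
    h _ Δ A B C le_rfl h1 h2
  clear h1 h2 Δ A B C
  intro n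
  induction n with
  | zero => intro Δ A B C hle; cases A <;> simp [sizeT] at hle
  | succ n ih =>
    intro Δ A B C hle h1 h2
    cases h2 with
    | and hsC ha hb =>
      have hq1 := (spl_size hsC).1
      have hq2 := (spl_size hsC).2
      exact .splr hsC (ih Δ _ _ _ (by omega) h1 ha) (ih Δ _ _ _ (by omega) h1 hb)
    | int => exact h1
    | var => exact h1
    | bot ho => exact disj_bot h1 rfl _
    | top ho ht => exact .topr ht
    | andl ho hs =>
      exact ih Δ _ _ _ (by simp [sizeT] at hle ⊢; omega) (disj_spl_r h1 .and).1 hs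
    | andr ho hs =>
      exact ih Δ _ _ _ (by simp [sizeT] at hle ⊢; omega) (disj_spl_r h1 .and).2 hs
    | arrow ho hC1B1 hB2C2 =>
      rename_i B1 B2 C1 C2
      cases h1 with
      | topl ht => exact .topl ht
      | topr ht => exact .topr (asub_tl (.arrow ho hC1B1 hB2C2) ht)
      | varl hmem hsub => exact .varl hmem (asub_trans hsub (.arrow ho hC1B1 hB2C2))
      | spll hsA ha hb =>
        have hq1 := (spl_size hsA).1
        have hq2 := (spl_size hsA).2
        exact .spll hsA (ih Δ _ _ _ (by omega) ha (.arrow ho hC1B1 hB2C2))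
          (ih Δ _ _ _ (by omega) hb (.arrow ho hC1B1 hB2C2))
      | splr hsB ha hb =>
        cases hsB with
        | arrow hsB2 =>
          have hq1 := (spl_size hsB2).1
          have hq2 := (spl_size hsB2).2
          have hoC2 : Ordinary C2 := by cases ho with | arrow h => exact h
          rcases asub_ord_inv hB2C2 hsB2 hoC2 with h | h | h
          · exact ih Δ _ _ _ (by simp [sizeT] at hle ⊢; omega) ha (.arrow ho hC1B1 h)
          · exact ih Δ _ _ _ (by simp [sizeT] at hle ⊢; omega) hb (.arrow ho hC1B1 h)
          · exact .topr (.arrow h)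
      | arrow hd =>
        exact .arrow (ih Δ _ _ _ (by simp [sizeT] at hle ⊢; omega) hd hB2C2)
      | ax hax => exact .ax (dax_sh hax (sh_refl _) .arrow)
    | rcd ho hsub =>
      rename_i l B0 C0
      cases h1 with
      | topl ht => exact .topl ht
      | topr ht => exact .topr (asub_tl (.rcd ho hsub) ht)
      | varl hmem hsub' => exact .varl hmem (asub_trans hsub' (.rcd ho hsub))
      | spll hsA ha hb =>
        have hq1 := (spl_size hsA).1
        have hq2 := (spl_size hsA).2
        exact .spll hsA (ih Δ _ _ _ (by omega) ha (.rcd ho hsub))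
          (ih Δ _ _ _ (by omega) hb (.rcd ho hsub))
      | splr hsB ha hb =>
        cases hsB with
        | rcd hsB0 =>
          have hq1 := (spl_size hsB0).1
          have hq2 := (spl_size hsB0).2
          have hoC0 : Ordinary C0 := by cases ho with | rcd h => exact h
          rcases asub_ord_inv hsub hsB0 hoC0 with h | h | h
          · exact ih Δ _ _ _ (by simp [sizeT] at hle ⊢; omega) ha (.rcd ho h)
          · exact ih Δ _ _ _ (by simp [sizeT] at hle ⊢; omega) hb (.rcd ho h)
          · exact .topr (.rcd h)
      | rcd hd =>
        exact .rcd (ih Δ _ _ _ (by simp [sizeT] at hle ⊢; omega) hd hsub)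
      | ax hax => exact .ax (dax_sh hax (sh_refl _) .rcd)
    | all ho hC1B1 hB2C2 =>
      rename_i X B1 B2 C1 C2
      cases h1 with
      | topl ht => exact .topl ht
      | topr ht => exact .topr (asub_tl (.all ho hC1B1 hB2C2) ht)
      | varl hmem hsub => exact .varl hmem (asub_trans hsub (.all ho hC1B1 hB2C2))
      | spll hsA ha hb =>
        have hq1 := (spl_size hsA).1
        have hq2 := (spl_size hsA).2
        exact .spll hsA (ih Δ _ _ _ (by omega) ha (.all ho hC1B1 hB2C2))
          (ih Δ _ _ _ (by omega) hb (.all ho hC1B1 hB2C2))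
      | splr hsB ha hb =>
        cases hsB with
        | all hsB2 =>
          have hq1 := (spl_size hsB2).1
          have hq2 := (spl_size hsB2).2
          have hoC2 : Ordinary C2 := by cases ho with | all h => exact h
          rcases asub_ord_inv hB2C2 hsB2 hoC2 with h | h | h
          · exact ih Δ _ _ _ (by simp [sizeT] at hle ⊢; omega) ha (.all ho hC1B1 h)
          · exact ih Δ _ _ _ (by simp [sizeT] at hle ⊢; omega) hb (.all ho hC1B1 h)
          · exact .topr (.all h)
      | all hd =>
        rename_i A1 A2
        have hQP : ASub Δ (.and A1 C1) (.and A1 B1) :=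
          .and .and (asub_andl (asub_refl Δ A1)) (asub_andr hC1B1)
        have hd' : Disj ((X, .and A1 C1) :: Δ) A2 B2 :=
          disj_narrow hd (E := []) rfl hQP
        have hB2C2' : ASub ((X, .and A1 C1) :: Δ) B2 C2 :=
          asub_rel hB2C2 (narrow_cond (asub_andr (asub_refl Δ C1)))
        exact .all (ih _ _ _ _ (by simp [sizeT] at hle ⊢; omega) hd' hB2C2')
      | ax hax => exact .ax (dax_sh hax (sh_refl _) .all)
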